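/- For every t with 0 < t < D(N), one has q′(t) ≥ (1/D(0))·exp(−t/D(0)), and consequently q(t) ≥ (t/D(0))·exp(−t/D(0)). (This is the lower bound on p_t(ω,η) for 0 < t < D(ω,η) established in the proof of Proposition 4.2, showing that the off-diagonal heat kernel is bounded below by a constant times t.) -/

import Mathlib

open Filter Set

/-- Kigami's off-diagonal heat kernel `q(t) = p_t(ω,η)` at confluence level `N`, in sequence
form: `q(t) = ∑_{n=0}^N (1/H(n))·(exp(−t/D(n−1)) − exp(−t/D(n)))`, with the convention
`exp(−t/D(−1)) := 1`. -/
noncomputable def qfun (H D : ℕ → ℝ) (N : ℕ) (t : ℝ) : ℝ :=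
  ∑ n ∈ Finset.range (N + 1),
    (1 / H n) * ((if n = 0 then 1 else Real.exp (-t / D (n - 1))) - Real.exp (-t / D n))

/-- `x e^{-x}` is monotone on `[0,1]`. -/
lemma aux_mono (u v : ℝ) (hv : 0 ≤ v) (hvu : v ≤ u) (hu : u ≤ 1) :
    v * Real.exp (-v) ≤ u * Real.exp (-u) := by
  have h1 : (v - u) + 1 ≤ Real.exp (v - u) := Real.add_one_le_exp _
  have h2 : Real.exp (v - u) * Real.exp (u - v) = 1 := by
    rw [← Real.exp_add]; ring_nf; exact Real.exp_zero
  have h3 : Real.exp (-v) = Real.exp (-u) * Real.exp (u - v) := by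
    rw [← Real.exp_add]; ring_nf
  have h4 := Real.exp_pos (-u)
  have h5 := Real.exp_pos (u - v)
  have h6 : (u - v) + 1 ≤ Real.exp (u - v) := Real.add_one_le_exp _
  rw [h3]
  have key : v * Real.exp (u - v) ≤ u := by
    nlinarith [mul_le_mul_of_nonneg_right h1 h5.le, mul_nonneg (sub_nonneg.mpr hu)
      (by nlinarith : (0:ℝ) ≤ Real.exp (u - v) - 1)]
  nlinarith

lemma exp_neg_div_hasDerivAt (c t : ℝ) :
    HasDerivAt (fun t : ℝ => Real.exp (-t / c)) (Real.exp (-t / c) * (-1 / c)) t :=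
  ((hasDerivAt_id t).neg.div_const c).exp

/-- lower bound on the off-diagonal heat kernel for `0 < t < D(ω,η)` from the
proof of Proposition 4.2: `q′(t) ≥ (1/D(0))·exp(−t/D(0))` and consequently
`q(t) ≥ (t/D(0))·exp(−t/D(0))`. -/
theorem stmt9 (N : ℕ) (H D : ℕ → ℝ)
    (hH_anti : Antitone H) (hH0 : H 0 = 1) (hH_pos : ∀ n ≤ N, 0 < H n)
    (hD_anti : StrictAnti D) (hD_pos : ∀ n ≤ N, 0 < D n) :
    ∀ t : ℝ, 0 < t → t < D N →
      (1 / D 0) * Real.exp (-t / D 0) ≤ deriv (qfun H D N) t ∧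
      (t / D 0) * Real.exp (-t / D 0) ≤ qfun H D N t := by
  intro t ht htD
  have hD0 : 0 < D 0 := hD_pos 0 (Nat.zero_le N)
  -- derivative of qfun
  have hderiv : HasDerivAt (qfun H D N)
      (∑ n ∈ Finset.range (N + 1),
        (1 / H n) * ((if n = 0 then 0 else Real.exp (-t / D (n - 1)) * (-1 / D (n - 1)))
          - Real.exp (-t / D n) * (-1 / D n))) t := by
    have : HasDerivAt (fun t => ∑ n ∈ Finset.range (N + 1),
        (1 / H n) * ((if n = 0 then 1 else Real.exp (-t / D (n - 1))) - Real.exp (-t / D n)))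
        (∑ n ∈ Finset.range (N + 1),
        (1 / H n) * ((if n = 0 then 0 else Real.exp (-t / D (n - 1)) * (-1 / D (n - 1)))
          - Real.exp (-t / D n) * (-1 / D n))) t := by
      apply HasDerivAt.fun_sum
      intro n _
      by_cases hn : n = 0
      · simp only [hn, if_pos]
        exact ((hasDerivAt_const t (1 : ℝ)).sub (exp_neg_div_hasDerivAt (D 0) t)).const_mul _
          |>.congr_deriv (by ring)
      · simp only [if_neg hn]
        exact ((exp_neg_div_hasDerivAt (D (n - 1)) t).sub
          (exp_neg_div_hasDerivAt (D n) t)).const_mul _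
    exact this
  -- key monotonicity : for 1 ≤ n ≤ N, e^{-t/D(n-1)}/D(n-1) ≤ e^{-t/D n}/D n
  have hterm : ∀ n, n ∈ Finset.range (N + 1) → n ≠ 0 →
      Real.exp (-t / D (n - 1)) * (1 / D (n - 1)) ≤ Real.exp (-t / D n) * (1 / D n) := by
    intro n hn hn0
    have hnN : n ≤ N := Nat.lt_succ_iff.mp (Finset.mem_range.mp hn)
    have hDn : 0 < D n := hD_pos n hnN
    have hDn1 : 0 < D (n - 1) := hD_pos _ (le_trans (Nat.sub_le n 1) hnN)
    have hlt : D n < D (n - 1) := hD_anti (Nat.sub_lt (Nat.pos_of_ne_zero hn0) one_pos)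
    have htn : t < D n := lt_of_lt_of_le htD (hD_anti.antitone hnN)
    set u := t / D n with hu
    set v := t / D (n - 1) with hvv
    have hv0 : 0 ≤ v := div_nonneg ht.le hDn1.le
    have hvu : v ≤ u := div_le_div_of_nonneg_left ht.le hDn hlt.le
    have hu1 : u ≤ 1 := by rw [div_le_one hDn]; exact htn.le
    have := aux_mono u v hv0 hvu hu1
    have hvt : v * Real.exp (-v) = t * (Real.exp (-t / D (n - 1)) * (1 / D (n - 1))) := by
      rw [hvv, neg_div]; ring
    have hut : u * Real.exp (-u) = t * (Real.exp (-t / D n) * (1 / D n)) := by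
      rw [hu, neg_div]; ring
    rw [hvt, hut] at this
    exact le_of_mul_le_mul_left this ht
  constructor
  · rw [hderiv.deriv]
    have h0mem : (0 : ℕ) ∈ Finset.range (N + 1) := Finset.mem_range.mpr (Nat.succ_pos N)
    have hge := Finset.single_le_sum (f := fun n =>
        (1 / H n) * ((if n = 0 then 0 else Real.exp (-t / D (n - 1)) * (-1 / D (n - 1)))
          - Real.exp (-t / D n) * (-1 / D n))) (fun n hn => ?_) h0mem
    · refine le_trans (le_of_eq ?_) hge
      simp only [if_pos, hH0]
      ring
    · by_cases hn0 : n = 0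
      · subst hn0
        simp only [if_pos, hH0]
        have hpos : (0:ℝ) ≤ Real.exp (-t / D 0) * (1 / D 0) :=
          mul_nonneg (Real.exp_pos _).le (one_div_pos.mpr hD0).le
        have heq : (1:ℝ) / 1 * (0 - Real.exp (-t / D 0) * (-1 / D 0))
            = Real.exp (-t / D 0) * (1 / D 0) := by ring
        rw [heq]; exact hpos
      · simp only [if_neg hn0]
        have hnN : n ≤ N := Nat.lt_succ_iff.mp (Finset.mem_range.mp hn)
        have h1 : (0:ℝ) ≤ 1 / H n := (one_div_pos.mpr (hH_pos n hnN)).le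
        have h2 := hterm n hn hn0
        refine mul_nonneg h1 ?_
        have heq : Real.exp (-t / D (n - 1)) * (-1 / D (n - 1)) - Real.exp (-t / D n) * (-1 / D n)
            = Real.exp (-t / D n) * (1 / D n) - Real.exp (-t / D (n - 1)) * (1 / D (n - 1)) := by
          ring
        rw [heq]; linarith
  · -- qfun lower bound
    have h0mem : (0 : ℕ) ∈ Finset.range (N + 1) := Finset.mem_range.mpr (Nat.succ_pos N)
    have hge := Finset.single_le_sum (f := fun n =>
        (1 / H n) * ((if n = 0 then 1 else Real.exp (-t / D (n - 1))) - Real.exp (-t / D n)))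
        (fun n hn => ?_) h0mem
    · have key : (t / D 0) * Real.exp (-t / D 0) ≤ 1 - Real.exp (-t / D 0) := by
        set x := t / D 0 with hx
        have hx0 : 0 < x := div_pos ht hD0
        have h1 : x + 1 ≤ Real.exp x := Real.add_one_le_exp x
        have h2 : Real.exp x * Real.exp (-x) = 1 := by
          rw [← Real.exp_add]; simp
        have h3 := Real.exp_pos (-x)
        rw [neg_div]
        nlinarith
      rw [qfun]
      refine le_trans ?_ hge
      simpa [hH0] using key
    · by_cases hn0 : n = 0
      · subst hn0
        simp only [if_pos, hH0]
        have : Real.exp (-t / D 0) ≤ 1 := by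
          rw [Real.exp_le_one_iff, neg_div]
          simp [div_nonneg ht.le hD0.le]
        nlinarith
      · simp only [if_neg hn0]
        have hnN : n ≤ N := Nat.lt_succ_iff.mp (Finset.mem_range.mp hn)
        have hDn : 0 < D n := hD_pos n hnN
        have hDn1 : 0 < D (n - 1) := hD_pos _ (le_trans (Nat.sub_le n 1) hnN)
        have hlt : D n < D (n - 1) := hD_anti (Nat.sub_lt (Nat.pos_of_ne_zero hn0) one_pos)
        have hexp : Real.exp (-t / D n) ≤ Real.exp (-t / D (n - 1)) := by
          apply Real.exp_le_exp.mpr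
          rw [neg_div, neg_div, neg_le_neg_iff]
          exact div_le_div_of_nonneg_left ht.le hDn hlt.le
        have hHn : 0 < H n := hH_pos n hnN
        have h1 : 0 ≤ 1 / H n := by positivity
        nlinarith
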